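/- For all integers d ≥ 2, n ≥ 3 and m ≥ 0, the determinant of the metric tensor matrix G^m(v) is bounded above by a rational function of the edge lengths whose denominator only has factors of the prescribed form: there exist a real polynomial P in n variables X_0, …, X_{n-1} and a polynomial Q that is a finite product of factors, each of the form X_i, X_i + X_{i-1 (mod n)}, or X_0 + ⋯ + X_{n-1}, such that for every v ∈ ℝ_*^{d×n} one has Q(|e_0(v)|, …, |e_{n-1}(v)|) > 0 and det G^m(v) ≤ P(|e_0(v)|, …, |e_{n-1}(v)|) / Q(|e_0(v)|, …, |e_{n-1}(v)|). -/

import Mathlib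

open scoped InnerProductSpace BigOperators
open MeasureTheory Filter Topology

noncomputable section

/-- Euclidean space ℝ^d. -/
abbrev Vec (d : ℕ) := EuclideanSpace ℝ (Fin d)

variable {d n : ℕ}

/-- Edges of the discrete closed curve: `e i (v) = v (i+1) - v i`. -/
def edge (v : ZMod n → Vec d) (i : ZMod n) : Vec d := v (i + 1) - v i

/-- Discrete regularity: adjacent vertices are distinct. -/
def IsReg (v : ZMod n → Vec d) : Prop := ∀ i, v i ≠ v (i + 1)

/-- Total length of the discrete curve. -/
def len [NeZero n] (v : ZMod n → Vec d) : ℝ := ∑ i, ‖edge v i‖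

/-- Discrete arc-length derivative of order `m`: odd orders use forward differences
divided by `|e_i|`, even (positive) orders use backward differences divided by the
averaged edge length. -/
def Ds (v h : ZMod n → Vec d) : ℕ → ZMod n → Vec d
  | 0 => h
  | (m + 1) => fun i =>
    if (m + 1) % 2 = 1 then
      (‖edge v i‖)⁻¹ • (Ds v h m (i + 1) - Ds v h m i)
    else
      ((‖edge v i‖ + ‖edge v (i - 1)‖) / 2)⁻¹ • (Ds v h m i - Ds v h m (i - 1))

/-- The weights μ_i in the higher-order term. -/
def mu (v : ZMod n → Vec d) (m : ℕ) (i : ZMod n) : ℝ :=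
  if m % 2 = 1 then ‖edge v i‖ else (‖edge v i‖ + ‖edge v (i - 1)‖) / 2

/-- The discrete Sobolev-type metric of order `m`. -/
def gMet [NeZero n] (m : ℕ) (v h k : ZMod n → Vec d) : ℝ :=
  ∑ i, (⟪h i, k i⟫_ℝ / len v ^ 3 * ((‖edge v i‖ + ‖edge v (i - 1)‖) / 2)
    + ⟪Ds v h m i, Ds v k m i⟫_ℝ / len v ^ ((3 : ℤ) - 2 * (m : ℤ)) * mu v m i)

/-- Standard basis vectors of (ℝ^d)^n. -/
def stdB (a : Fin d) (i : ZMod n) : ZMod n → Vec d :=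
  fun j => if j = i then EuclideanSpace.single a 1 else 0

/-- The (dn)×(dn) metric tensor matrix of g^m in the standard basis. -/
def metricMatrix [NeZero n] (m : ℕ) (v : ZMod n → Vec d) :
    Matrix (Fin d × ZMod n) (Fin d × ZMod n) ℝ :=
  Matrix.of fun p q => gMet m v (stdB p.1 p.2) (stdB q.1 q.2)

section Aux
variable [NeZero n]

def Abig (v : ZMod n → Vec d) : ℝ :=
  ∑ i, ((‖edge v i‖)⁻¹ + ((‖edge v i‖ + ‖edge v (i - 1)‖) / 2)⁻¹)

lemma Abig_nonneg (v : ZMod n → Vec d) : 0 ≤ Abig v :=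
  Finset.sum_nonneg fun i _ => add_nonneg (inv_nonneg.2 (norm_nonneg _))
    (inv_nonneg.2 (by positivity))

lemma term_le_Abig (v : ZMod n → Vec d) (i : ZMod n) :
    (‖edge v i‖)⁻¹ + ((‖edge v i‖ + ‖edge v (i - 1)‖) / 2)⁻¹ ≤ Abig v :=
  Finset.single_le_sum (f := fun j => (‖edge v j‖)⁻¹ + ((‖edge v j‖ + ‖edge v (j - 1)‖) / 2)⁻¹)
    (fun j _ => add_nonneg (inv_nonneg.2 (norm_nonneg _)) (inv_nonneg.2 (by positivity)))
    (Finset.mem_univ i)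

lemma inv_edge_le_Abig (v : ZMod n → Vec d) (i : ZMod n) :
    (‖edge v i‖)⁻¹ ≤ Abig v :=
  le_trans (le_add_of_nonneg_right (inv_nonneg.2 (by positivity))) (term_le_Abig v i)

lemma inv_avg_le_Abig (v : ZMod n → Vec d) (i : ZMod n) :
    ((‖edge v i‖ + ‖edge v (i - 1)‖) / 2)⁻¹ ≤ Abig v :=
  le_trans (le_add_of_nonneg_left (inv_nonneg.2 (norm_nonneg _))) (term_le_Abig v i)

lemma norm_Ds_le (v h : ZMod n → Vec d) (hb : ∀ j, ‖h j‖ ≤ 1) (m : ℕ) (i : ZMod n) :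
    ‖Ds v h m i‖ ≤ (2 * Abig v) ^ m := by
  induction m generalizing i with
  | zero => simpa [Ds] using hb i
  | succ m ih =>
    have hA : 0 ≤ Abig v := Abig_nonneg v
    have h2 : (0:ℝ) ≤ (2 * Abig v) ^ m := by positivity
    have key : ∀ (c : ℝ), 0 ≤ c → c⁻¹ ≤ Abig v → ∀ x y : ZMod n,
        ‖c⁻¹ • (Ds v h m x - Ds v h m y)‖ ≤ (2 * Abig v) ^ (m + 1) := by
      intro c hc hcA x y
      rw [norm_smul, Real.norm_eq_abs, abs_of_nonneg (inv_nonneg.2 hc)]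
      have hsub : ‖Ds v h m x - Ds v h m y‖ ≤ 2 * (2 * Abig v) ^ m := by
        calc ‖Ds v h m x - Ds v h m y‖ ≤ ‖Ds v h m x‖ + ‖Ds v h m y‖ := norm_sub_le _ _
        _ ≤ 2 * (2 * Abig v) ^ m := by linarith [ih x, ih y]
      calc c⁻¹ * ‖Ds v h m x - Ds v h m y‖ ≤ Abig v * (2 * (2 * Abig v) ^ m) :=
            mul_le_mul hcA hsub (norm_nonneg _) hA
        _ = (2 * Abig v) ^ (m + 1) := by ring
    show ‖(if (m + 1) % 2 = 1 then _ else _ : Vec d)‖ ≤ _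
    split_ifs
    · exact key _ (norm_nonneg _) (inv_edge_le_Abig v i) _ _
    · exact key _ (by positivity) (inv_avg_le_Abig v i) _ _

lemma norm_stdB_le (a : Fin d) (i j : ZMod n) : ‖stdB a i j‖ ≤ 1 := by
  unfold stdB
  split <;> simp [EuclideanSpace.norm_single]

lemma edge_norm_pos (v : ZMod n → Vec d) (hreg : IsReg v) (i : ZMod n) : 0 < ‖edge v i‖ :=
  norm_pos_iff.2 (sub_ne_zero.2 (Ne.symm (hreg i)))

lemma len_pos (v : ZMod n → Vec d) (hreg : IsReg v) : 0 < len v :=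
  Finset.sum_pos (fun i _ => edge_norm_pos v hreg i) Finset.univ_nonempty

lemma edge_le_len (v : ZMod n → Vec d) (i : ZMod n) : ‖edge v i‖ ≤ len v :=
  Finset.single_le_sum (fun j _ => norm_nonneg _) (Finset.mem_univ i)

lemma mu_nonneg (v : ZMod n → Vec d) (m : ℕ) (i : ZMod n) : 0 ≤ mu v m i := by
  unfold mu; split <;> positivity

lemma mu_le_len (v : ZMod n → Vec d) (m : ℕ) (i : ZMod n) : mu v m i ≤ len v := by
  unfold mu
  have h1 := edge_le_len v i
  have h2 := edge_le_len v (i - 1)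
  have h3 := norm_nonneg (edge v i)
  have h4 := norm_nonneg (edge v (i - 1))
  split <;> linarith

/-- Entry bound for the metric. -/
lemma gMet_abs_le (m : ℕ) (v h k : ZMod n → Vec d) (hreg : IsReg v)
    (hh : ∀ j, ‖h j‖ ≤ 1) (hk : ∀ j, ‖k j‖ ≤ 1) :
    |gMet m v h k| ≤ (n : ℝ) * (1 / len v ^ 3 * len v
      + (2 * Abig v) ^ (2 * m) / len v ^ ((3 : ℤ) - 2 * (m : ℤ)) * len v) := by
  have hL : 0 < len v := len_pos v hreg
  have hz : (0:ℝ) < len v ^ ((3 : ℤ) - 2 * (m : ℤ)) := zpow_pos hL _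
  have hA : 0 ≤ Abig v := Abig_nonneg v
  unfold gMet
  refine le_trans (Finset.abs_sum_le_sum_abs _ _) ?_
  have hterm : ∀ i : ZMod n,
      |⟪h i, k i⟫_ℝ / len v ^ 3 * ((‖edge v i‖ + ‖edge v (i - 1)‖) / 2)
        + ⟪Ds v h m i, Ds v k m i⟫_ℝ / len v ^ ((3 : ℤ) - 2 * (m : ℤ)) * mu v m i|
      ≤ 1 / len v ^ 3 * len v
        + (2 * Abig v) ^ (2 * m) / len v ^ ((3 : ℤ) - 2 * (m : ℤ)) * len v := by
    intro i
    refine le_trans (abs_add_le _ _) (add_le_add ?_ ?_)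
    · rw [abs_mul, abs_div, abs_of_pos (pow_pos hL 3),
        abs_of_nonneg (by positivity : (0:ℝ) ≤ (‖edge v i‖ + ‖edge v (i - 1)‖) / 2)]
      have hi : |⟪h i, k i⟫_ℝ| ≤ 1 := by
        refine le_trans (abs_real_inner_le_norm _ _) ?_
        exact mul_le_one₀ (hh i) (norm_nonneg _) (hk i)
      have hw : (‖edge v i‖ + ‖edge v (i - 1)‖) / 2 ≤ len v := by
        have h1 := edge_le_len v i
        have h2 := edge_le_len v (i - 1)
        have := len_pos v hreg
        linarith
      gcongr <;> first | exact abs_nonneg _ | positivity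
    · rw [abs_mul, abs_div, abs_of_pos hz, abs_of_nonneg (mu_nonneg v m i)]
      have hi : |⟪Ds v h m i, Ds v k m i⟫_ℝ| ≤ (2 * Abig v) ^ (2 * m) := by
        refine le_trans (abs_real_inner_le_norm _ _) ?_
        calc ‖Ds v h m i‖ * ‖Ds v k m i‖
            ≤ (2 * Abig v) ^ m * (2 * Abig v) ^ m :=
              mul_le_mul (norm_Ds_le v h hh m i) (norm_Ds_le v k hk m i)
                (norm_nonneg _) (by positivity)
          _ = (2 * Abig v) ^ (2 * m) := by rw [← pow_add]; congr 1; omega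
      gcongr <;> first | exact abs_nonneg _ | positivity | exact mu_le_len v m i | exact mu_nonneg v m i
  refine le_trans (Finset.sum_le_sum fun i _ => hterm i) ?_
  rw [Finset.sum_const, Finset.card_univ, ZMod.card, nsmul_eq_mul]

end Aux

section Poly
open MvPolynomial
variable (n : ℕ) [NeZero n]

def Lpoly : MvPolynomial (ZMod n) ℝ := ∑ i, X i
def P1poly : MvPolynomial (ZMod n) ℝ := ∏ i, X i
def P2poly : MvPolynomial (ZMod n) ℝ := ∏ i, (X i + X (i - 1))
def Rpoly : MvPolynomial (ZMod n) ℝ :=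
  ∑ i, ((∏ j ∈ Finset.univ.erase i, X j) * P2poly n
    + C 2 * (P1poly n * ∏ j ∈ Finset.univ.erase i, (X j + X (j - 1))))
def Spoly (m : ℕ) : MvPolynomial (ZMod n) ℝ :=
  C (n : ℝ) * ((P1poly n * P2poly n) ^ (2 * m)
    + C ((2:ℝ) ^ (2 * m)) * (Rpoly n ^ (2 * m) * Lpoly n ^ (2 * m)))

def facList (m N : ℕ) : List (MvPolynomial (ZMod n) ℝ) :=
  List.replicate (2 * N) (Lpoly n)
    ++ (List.replicate (2 * m * N) ((Finset.univ.toList).map fun i : ZMod n => X i)).flatten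
    ++ (List.replicate (2 * m * N)
        ((Finset.univ.toList).map fun i : ZMod n => X i + X (i - 1))).flatten

lemma facList_prod (m N : ℕ) :
    (facList n m N).prod = Lpoly n ^ (2 * N) * P1poly n ^ (2 * m * N) * P2poly n ^ (2 * m * N) := by
  simp [facList, List.prod_append, List.prod_flatten, List.map_replicate, List.prod_replicate,
    Finset.prod_map_toList, P1poly, P2poly, mul_assoc]

lemma facList_mem (m N : ℕ) (p : MvPolynomial (ZMod n) ℝ) (hp : p ∈ facList n m N) :
    (∃ i, p = X i) ∨ (∃ i, p = X i + X (i - 1)) ∨ p = ∑ i, X i := by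
  simp only [facList, List.mem_append, List.mem_flatten, List.mem_replicate, List.mem_map] at hp
  rcases hp with (hp | ⟨l, ⟨-, rfl⟩, hp⟩) | ⟨l, ⟨-, rfl⟩, hp⟩
  · exact Or.inr (Or.inr hp.2)
  · obtain ⟨i, -, rfl⟩ := List.mem_map.1 hp
    exact Or.inl ⟨i, rfl⟩
  · obtain ⟨i, -, rfl⟩ := List.mem_map.1 hp
    exact Or.inr (Or.inl ⟨i, rfl⟩)

variable (w : ZMod n → ℝ)

lemma eval_Lpoly : eval w (Lpoly n) = ∑ i, w i := by simp [Lpoly]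
lemma eval_P1poly : eval w (P1poly n) = ∏ i, w i := by simp [P1poly]
lemma eval_P2poly : eval w (P2poly n) = ∏ i, (w i + w (i - 1)) := by simp [P2poly]

lemma eval_Rpoly (hw : ∀ i, 0 < w i) :
    eval w (Rpoly n) = (∑ i, ((w i)⁻¹ + ((w i + w (i - 1)) / 2)⁻¹))
      * ((∏ i, w i) * ∏ i, (w i + w (i - 1))) := by
  rw [Finset.sum_mul]
  simp only [Rpoly, map_sum, map_add, map_mul, map_prod, eval_X, eval_C, eval_P1poly, eval_P2poly]
  refine Finset.sum_congr rfl fun i _ => ?_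
  have h1 : w i * ∏ j ∈ Finset.univ.erase i, w j = ∏ j, w j :=
    Finset.mul_prod_erase _ _ (Finset.mem_univ i)
  have h2 : (w i + w (i - 1)) * ∏ j ∈ Finset.univ.erase i, (w j + w (j - 1)) =
      ∏ j, (w j + w (j - 1)) :=
    Finset.mul_prod_erase _ (fun j => w j + w (j - 1)) (Finset.mem_univ i)
  have hwi : w i ≠ 0 := (hw i).ne'
  have hci : w i + w (i - 1) ≠ 0 := by have := hw i; have := hw (i - 1); positivity
  rw [← h1, ← h2]
  field_simp

lemma eval_Spoly (m : ℕ) :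
    eval w (Spoly n m) = (n : ℝ) * (((∏ i, w i) * ∏ i, (w i + w (i - 1))) ^ (2 * m)
      + 2 ^ (2 * m) * ((eval w (Rpoly n)) ^ (2 * m) * (∑ i, w i) ^ (2 * m))) := by
  simp [Spoly, eval_P1poly, eval_P2poly, eval_Lpoly]

end Poly

open MvPolynomial

/-- Lemma 2.2: `det G^m(v)` is bounded above by a rational function of
the edge lengths whose denominator is a finite product of factors of the form `X i`,
`X i + X (i-1)`, or `X 0 + ⋯ + X (n-1)`, positive on the regular set. -/
theorem det_metricMatrix_le_rational (d n m : ℕ) (hd : 2 ≤ d) (hn : 3 ≤ n) [NeZero n] :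
    ∃ (P Q : MvPolynomial (ZMod n) ℝ) (k : ℕ) (F : Fin k → MvPolynomial (ZMod n) ℝ),
      Q = ∏ j, F j ∧
      (∀ j, (∃ i, F j = MvPolynomial.X i) ∨
            (∃ i, F j = MvPolynomial.X i + MvPolynomial.X (i - 1)) ∨
            F j = ∑ i, MvPolynomial.X i) ∧
      ∀ v : ZMod n → Vec d, IsReg v →
        0 < MvPolynomial.eval (fun i => ‖edge v i‖) Q ∧
        (metricMatrix m v).det ≤ MvPolynomial.eval (fun i => ‖edge v i‖) P /
          MvPolynomial.eval (fun i => ‖edge v i‖) Q := by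
  classical
  set N := Fintype.card (Fin d × ZMod n) with hN
  refine ⟨C ((N.factorial : ℝ)) * Spoly n m ^ N,
    Lpoly n ^ (2 * N) * P1poly n ^ (2 * m * N) * P2poly n ^ (2 * m * N),
    (facList n m N).length, fun j => (facList n m N).get j, ?_, ?_, ?_⟩
  · rw [← facList_prod n m N, ← Fin.prod_univ_getElem]
    simp [List.get_eq_getElem]
  · intro j
    exact facList_mem n m N _ (List.get_mem _ _)
  · intro v hreg
    have he : ∀ i, 0 < ‖edge v i‖ := edge_norm_pos v hreg
    have hL : 0 < len v := len_pos v hreg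
    set w : ZMod n → ℝ := fun i => ‖edge v i‖ with hwdef
    have hD1 : 0 < ∏ i, w i := Finset.prod_pos fun i _ => he i
    have hD2 : 0 < ∏ i, (w i + w (i - 1)) :=
      Finset.prod_pos fun i _ => by have := he i; have := he (i - 1); positivity
    have hsum : ∑ i, w i = len v := rfl
    have hwpos : ∀ i, 0 < w i := he
    have hevQ : eval w (Lpoly n ^ (2 * N) * P1poly n ^ (2 * m * N) * P2poly n ^ (2 * m * N))
        = (len v ^ 2 * ((∏ i, w i) * ∏ i, (w i + w (i - 1))) ^ (2 * m)) ^ N := by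
      simp only [map_mul, map_pow, eval_Lpoly, eval_P1poly, eval_P2poly, hsum]
      ring
    have hevP : eval w (C ((N.factorial : ℝ)) * Spoly n m ^ N)
        = (N.factorial : ℝ) * (eval w (Spoly n m)) ^ N := by
      simp
    constructor
    · rw [hevQ]
      exact pow_pos (mul_pos (pow_pos hL 2) (pow_pos (mul_pos hD1 hD2) _)) _
    have hentry : ∀ p q, |metricMatrix m v p q| ≤ (n : ℝ) * (1 / len v ^ 3 * len v
        + (2 * Abig v) ^ (2 * m) / len v ^ ((3 : ℤ) - 2 * (m : ℤ)) * len v) :=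
      fun p q => gMet_abs_le m v _ _ hreg (norm_stdB_le _ _) (norm_stdB_le _ _)
    set E : ℝ := (n : ℝ) * (1 / len v ^ 3 * len v
        + (2 * Abig v) ^ (2 * m) / len v ^ ((3 : ℤ) - 2 * (m : ℤ)) * len v) with hEdef
    have hdet : |(metricMatrix m v).det| ≤ N.factorial • E ^ N := by
      have := Matrix.det_le (A := metricMatrix m v) (abv := AbsoluteValue.abs) (x := E)
        (fun p q => by simpa using hentry p q)
      simpa [hN] using this
    have hz : len v ^ ((3 : ℤ) - 2 * (m : ℤ)) = len v ^ (3 : ℕ) / len v ^ (2 * m) := by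
      rw [show (3 : ℤ) - 2 * (m : ℤ) = ((3 : ℕ) : ℤ) - ((2 * m : ℕ) : ℤ) by push_cast; ring,
        zpow_sub₀ hL.ne', zpow_natCast, zpow_natCast]
    have hR : eval w (Rpoly n) = Abig v * ((∏ i, w i) * ∏ i, (w i + w (i - 1))) := by
      rw [eval_Rpoly n w hwpos]
      rfl
    have hE : E = eval w (Spoly n m)
        / (len v ^ 2 * ((∏ i, w i) * ∏ i, (w i + w (i - 1))) ^ (2 * m)) := by
      rw [eval_Spoly, hR, hsum, hEdef, hz]
      have hD1' := hD1.ne'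
      have hD2' := hD2.ne'
      have hL' := hL.ne'
      field_simp
      ring
    calc (metricMatrix m v).det ≤ |(metricMatrix m v).det| := le_abs_self _
      _ ≤ N.factorial • E ^ N := hdet
      _ = (N.factorial : ℝ) * E ^ N := nsmul_eq_mul _ _
      _ = _ := by rw [hE, div_pow, hevP, hevQ, mul_div_assoc]
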